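/- Let σ ∈ (1/2, 1). Then for every ξ ∈ ℝ with ξ ≠ 0, (p₁(ξ) + p₁(−ξ))/2 < |ξ|^{2σ}; that is, the even part of the symbol p₁ is strictly dominated by the symbol |ξ|^{2σ} of (−Δ)^σ away from the origin. -/

import Mathlib

open Real

/-- The symbol `p₁(ξ) = |ξ+1|^{2σ} − 1 − 2σξ`. -/
noncomputable def pOne (σ : ℝ) (ξ : ℝ) : ℝ := |ξ + 1| ^ (2*σ) - 1 - 2*σ*ξ

lemma rpow_subadd {a b p : ℝ} (ha : 0 ≤ a) (hb : 0 ≤ b) (hp : 0 ≤ p) (hp1 : p ≤ 1) :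
    (a + b) ^ p ≤ a ^ p + b ^ p := by
  lift a to NNReal using ha
  lift b to NNReal using hb
  exact_mod_cast NNReal.rpow_add_le_add_rpow a b hp hp1

lemma mul_sq_rpow {σ a : ℝ} (ha : 0 < a) : a * (a ^ 2) ^ (σ - 1) = a ^ (2 * σ - 1) := by
  have h : (2:ℝ) * σ - 1 = 2 * (σ - 1) + 1 := by ring
  rw [h, Real.rpow_add_one ha.ne', ← Real.rpow_natCast a 2, ← Real.rpow_mul ha.le, mul_comm]
  norm_num

noncomputable def fAux (σ : ℝ) (x : ℝ) : ℝ :=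
  ((1 + x) ^ 2) ^ σ + ((1 - x) ^ 2) ^ σ - 2 - 2 * ((x ^ 2) ^ σ)

lemma fAux_hasDeriv (σ : ℝ) {x : ℝ} (hx0 : 0 < x) (hx1 : x ≠ 1) :
    HasDerivAt (fAux σ)
      (2 * σ * ((1 + x) * ((1 + x) ^ 2) ^ (σ - 1)
        - (1 - x) * ((1 - x) ^ 2) ^ (σ - 1) - 2 * (x * (x ^ 2) ^ (σ - 1)))) x := by
  have h1x : (0:ℝ) < 1 + x := by linarith
  have h1 : HasDerivAt (fun y : ℝ => (1 + y) ^ 2) (2 * (1 + x)) x := by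
    have := ((hasDerivAt_id x).const_add 1).pow 2
    norm_num at this
    exact this
  have h2 : HasDerivAt (fun y : ℝ => (1 - y) ^ 2) (-(2 * (1 - x))) x := by
    have := ((hasDerivAt_id x).const_sub 1).pow 2
    norm_num at this
    exact this
  have h3 : HasDerivAt (fun y : ℝ => y ^ 2) (2 * x) x := by
    have := (hasDerivAt_id x).pow 2
    norm_num at this
    exact this
  have H1 := h1.rpow_const (p := σ) (Or.inl (by positivity))
  have H2 := h2.rpow_const (p := σ) (Or.inl (by
    have : (1:ℝ) - x ≠ 0 := fun h => hx1 (by linarith)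
    positivity))
  have H3 := h3.rpow_const (p := σ) (Or.inl (by positivity))
  have := (H1.add H2).sub_const 2 |>.sub (H3.const_mul 2)
  refine this.congr_deriv ?_
  ring

lemma fAux_deriv_neg (σ : ℝ) (hσ : σ ∈ Set.Ioo (1/2 : ℝ) 1) {x : ℝ} (hx0 : 0 < x)
    (hx1 : x ≠ 1) :
    2 * σ * ((1 + x) * ((1 + x) ^ 2) ^ (σ - 1)
      - (1 - x) * ((1 - x) ^ 2) ^ (σ - 1) - 2 * (x * (x ^ 2) ^ (σ - 1))) < 0 := by
  obtain ⟨hσ1, hσ2⟩ := hσ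
  set β : ℝ := 2 * σ - 1 with hβ
  have hβ0 : 0 < β := by rw [hβ]; linarith
  have hβ1 : β < 1 := by rw [hβ]; linarith
  have h1x : (0:ℝ) < 1 + x := by linarith
  have hσ0 : (0:ℝ) < 2 * σ := by linarith
  rw [mul_sq_rpow h1x, mul_sq_rpow hx0]
  rcases lt_or_gt_of_ne hx1 with hlt | hgt
  · -- 0 < x < 1
    have h1mx : (0:ℝ) < 1 - x := by linarith
    rw [mul_sq_rpow h1mx]
    apply mul_neg_of_pos_of_neg hσ0
    have key : (1 + x) ^ β ≤ (1 - x) ^ β + (2 * x) ^ β := by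
      have h := rpow_subadd h1mx.le (by linarith : (0:ℝ) ≤ 2 * x) hβ0.le hβ1.le
      have e : (1:ℝ) - x + 2 * x = 1 + x := by ring
      rwa [e] at h
    have h2x : (2 * x) ^ β = 2 ^ β * x ^ β := Real.mul_rpow (by norm_num) hx0.le
    have h2β : (2:ℝ) ^ β < 2 := by
      have := Real.rpow_lt_rpow_of_exponent_lt (by norm_num : (1:ℝ) < 2) hβ1
      simpa using this
    have hxβ : (0:ℝ) < x ^ β := Real.rpow_pos_of_pos hx0 β
    nlinarith
  · -- x > 1
    have hxm1 : (0:ℝ) < x - 1 := by linarith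
    have e : ((1:ℝ) - x) ^ 2 = (x - 1) ^ 2 := by ring
    rw [e]
    have e2 : -((1:ℝ) - x) = x - 1 := by ring
    apply mul_neg_of_pos_of_neg hσ0
    have hm := mul_sq_rpow (σ := σ) hxm1
    have sc := (Real.strictConcaveOn_rpow hβ0 hβ1).2
      (Set.mem_Ici.2 hxm1.le) (Set.mem_Ici.2 (by linarith : (0:ℝ) ≤ x + 1))
      (by intro h; linarith [h] : x - 1 ≠ x + 1)
      (by norm_num : (0:ℝ) < 1/2) (by norm_num : (0:ℝ) < 1/2) (by norm_num)
    simp only [smul_eq_mul] at sc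
    have emid : (1/2 : ℝ) * (x - 1) + (1/2) * (x + 1) = x := by ring
    rw [emid] at sc
    have e3 : (1:ℝ) + x = x + 1 := by ring
    rw [e3]
    have hm2 := mul_sq_rpow (σ := σ) (a := x + 1) (by linarith)
    nlinarith [hm, hm2, sc]

lemma fAux_neg (σ : ℝ) (hσ : σ ∈ Set.Ioo (1/2 : ℝ) 1) {x : ℝ} (hx : 0 < x) :
    fAux σ x < 0 := by
  obtain ⟨hσ1, hσ2⟩ := hσ
  have hσ0 : (0:ℝ) < σ := by linarith
  have cont : Continuous (fAux σ) := by
    unfold fAux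
    have c1 : Continuous fun y : ℝ => ((1 + y) ^ 2) ^ σ :=
      ((continuous_const.add continuous_id).pow 2).rpow_const fun y => Or.inr hσ0.le
    have c2 : Continuous fun y : ℝ => ((1 - y) ^ 2) ^ σ :=
      ((continuous_const.sub continuous_id).pow 2).rpow_const fun y => Or.inr hσ0.le
    have c3 : Continuous fun y : ℝ => (y ^ 2) ^ σ :=
      ((continuous_id.pow 2)).rpow_const fun y => Or.inr hσ0.le
    continuity
  have A1 : StrictAntiOn (fAux σ) (Set.Icc 0 1) := by
    apply strictAntiOn_of_deriv_neg (convex_Icc 0 1) cont.continuousOn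
    intro y hy
    rw [interior_Icc] at hy
    rw [(fAux_hasDeriv σ hy.1 hy.2.ne).deriv]
    exact fAux_deriv_neg σ ⟨hσ1, hσ2⟩ hy.1 hy.2.ne
  have A2 : StrictAntiOn (fAux σ) (Set.Ici 1) := by
    apply strictAntiOn_of_deriv_neg (convex_Ici 1) cont.continuousOn
    intro y hy
    rw [interior_Ici] at hy
    rw [(fAux_hasDeriv σ (by linarith [Set.mem_Ioi.1 hy] : (0:ℝ) < y) (by
      have := Set.mem_Ioi.1 hy; intro h; linarith)).deriv]
    exact fAux_deriv_neg σ ⟨hσ1, hσ2⟩ (by linarith [Set.mem_Ioi.1 hy])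
      (by have := Set.mem_Ioi.1 hy; intro h; linarith)
  have hf0 : fAux σ 0 = 0 := by
    simp [fAux, Real.zero_rpow hσ0.ne', Real.one_rpow]
    norm_num
  rcases le_or_gt x 1 with hx1 | hx1
  · have := A1 (Set.mem_Icc.2 ⟨le_refl 0, by norm_num⟩) (Set.mem_Icc.2 ⟨hx.le, hx1⟩) hx
    rwa [hf0] at this
  · have h1 : fAux σ 1 < fAux σ 0 := A1 (Set.mem_Icc.2 ⟨le_refl 0, by norm_num⟩)
      (Set.mem_Icc.2 ⟨by norm_num, le_refl 1⟩) one_pos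
    have h2 : fAux σ x < fAux σ 1 := A2 (Set.mem_Ici.2 (le_refl 1))
      (Set.mem_Ici.2 hx1.le) hx1
    rw [hf0] at h1
    linarith

/-- The even part of `p₁` is strictly dominated by the symbol `|ξ|^{2σ}` of `(−Δ)^σ`
away from the origin. -/
theorem pOne_even_part_lt (σ : ℝ) (hσ : σ ∈ Set.Ioo (1/2 : ℝ) 1) :
    ∀ ξ : ℝ, ξ ≠ 0 → (pOne σ ξ + pOne σ (-ξ)) / 2 < |ξ| ^ (2*σ) := by
  intro ξ hξ
  have habs : ∀ t : ℝ, |t| ^ (2*σ) = (t ^ 2) ^ σ := by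
    intro t
    have h2 : |t| ^ (2:ℝ) = t ^ 2 := by
      rw [show (2:ℝ) = ((2:ℕ):ℝ) by norm_num, Real.rpow_natCast, sq_abs]
    rw [Real.rpow_mul (abs_nonneg t), h2]
  have key := fAux_neg σ hσ (abs_pos.2 hξ)
  simp only [fAux] at key
  simp only [pOne, habs]
  rcases lt_or_gt_of_ne hξ with hneg | hpos
  · rw [abs_of_neg hneg] at key
    have e1 : (ξ + 1) ^ 2 = (1 - -ξ) ^ 2 := by ring
    have e2 : (-ξ + 1) ^ 2 = (1 + -ξ) ^ 2 := by ring
    have e3 : (-ξ) ^ 2 = ξ ^ 2 := by ring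
    rw [e3] at key
    rw [e1, e2]
    linarith
  · rw [abs_of_pos hpos] at key
    have e1 : (ξ + 1) ^ 2 = (1 + ξ) ^ 2 := by ring
    have e2 : (-ξ + 1) ^ 2 = (1 - ξ) ^ 2 := by ring
    rw [e1, e2]
    linarith
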